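/- Let I be an ideal of MvPolynomial (Fin n) k (k a field of characteristic zero) such that every element of I is divisible by X_1^b. Then the ideal Δ^{b−1}(I) is contained in the principal ideal (X_1), where Δ(J) denotes the ideal generated by J together with all partial derivatives ∂f/∂X_i of elements f ∈ J, and Δ^{b−1} is the (b−1)-fold iterate. -/

import Mathlib

open MvPolynomial

/-- The derivative extension `Δ(J) = J + (∂f/∂X_i : f ∈ J, i)` of an ideal of a
multivariate polynomial ring. -/
noncomputable def deltaIdeal {k : Type*} [Field k] {n : ℕ}
    (J : Ideal (MvPolynomial (Fin n) k)) : Ideal (MvPolynomial (Fin n) k) :=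
  J ⊔ Ideal.span {g | ∃ f ∈ J, ∃ i : Fin n, g = pderiv i f}

lemma pderiv_dvd_aux {k : Type*} [Field k] {n : ℕ} (i₀ i : Fin n) (m : ℕ)
    (f : MvPolynomial (Fin n) k) (h : (X i₀ : MvPolynomial (Fin n) k) ^ (m + 1) ∣ f) :
    (X i₀ : MvPolynomial (Fin n) k) ^ m ∣ pderiv i f := by
  obtain ⟨g, rfl⟩ := h
  rw [pderiv_mul]
  apply dvd_add
  · apply Dvd.dvd.mul_right
    rw [Derivation.leibniz_pow, Nat.add_sub_cancel, smul_eq_mul, nsmul_eq_mul]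
    exact (dvd_mul_right _ _).mul_left _
  · exact ((pow_dvd_pow _ (Nat.le_succ m)).mul_right _)

lemma deltaIdeal_step {k : Type*} [Field k] {n : ℕ} (i₀ : Fin n) (m : ℕ)
    (J : Ideal (MvPolynomial (Fin n) k))
    (h : J ≤ Ideal.span {(X i₀ : MvPolynomial (Fin n) k) ^ (m + 1)}) :
    deltaIdeal J ≤ Ideal.span {(X i₀ : MvPolynomial (Fin n) k) ^ m} := by
  rw [deltaIdeal]
  apply sup_le
  · intro f hf
    rw [Ideal.mem_span_singleton] at *
    exact dvd_trans (pow_dvd_pow (X i₀) (Nat.le_succ m)) (Ideal.mem_span_singleton.mp (h hf))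
  · rw [Ideal.span_le]
    rintro g ⟨f, hf, i, rfl⟩
    rw [SetLike.mem_coe, Ideal.mem_span_singleton]
    exact pderiv_dvd_aux i₀ i m f (Ideal.mem_span_singleton.mp (h hf))

lemma deltaIdeal_iter {k : Type*} [Field k] {n : ℕ} (i₀ : Fin n) (m : ℕ)
    (J : Ideal (MvPolynomial (Fin n) k))
    (h : J ≤ Ideal.span {(X i₀ : MvPolynomial (Fin n) k) ^ (m + 1)}) :
    (deltaIdeal)^[m] J ≤ Ideal.span {(X i₀ : MvPolynomial (Fin n) k)} := by
  induction m generalizing J with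
  | zero => simpa using h
  | succ m ih =>
    rw [Function.iterate_succ_apply]
    exact ih _ (deltaIdeal_step i₀ (m + 1) J h)

/-- if every element of `I` is divisible by `X i₀ ^ b`, then
`Δ^{b−1}(I) ⊆ (X i₀)`. -/
theorem deltaIdeal_iterate_le_span_of_pow_dvd
    {k : Type*} [Field k] [CharZero k] {n : ℕ} (i₀ : Fin n) (b : ℕ) (hb : 1 ≤ b)
    (I : Ideal (MvPolynomial (Fin n) k))
    (hI : ∀ f ∈ I, (X i₀ : MvPolynomial (Fin n) k) ^ b ∣ f) :
    (deltaIdeal)^[b - 1] I ≤ Ideal.span {(X i₀ : MvPolynomial (Fin n) k)} := by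
  obtain ⟨m, rfl⟩ : ∃ m, b = m + 1 := ⟨b - 1, by omega⟩
  simpa using deltaIdeal_iter i₀ m I (fun f hf => Ideal.mem_span_singleton.mpr (hI f hf))
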